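/- Let α ∈ (0,1) and 0 < y ≤ 1. Then (1 + αy/(α+1))^{-1/α} < 1 - y·(1/(α+1) - 1/2). -/

import Mathlib

theorem stmt3 (α y : ℝ) (hα0 : 0 < α) (hα1 : α < 1) (hy0 : 0 < y) (hy1 : y ≤ 1) :
    (1 + α * y / (α + 1)) ^ (-(1 / α)) < 1 - y * (1 / (α + 1) - 1 / 2) := by
  have hA : (0:ℝ) < α + 1 := by linarith
  set x := α * y / (α + 1) with hxdef
  set t := y * (1 / (α + 1) - 1 / 2) with htdef
  have hx : 0 < x := by positivity
  have hd : 1 / (α + 1) - 1 / 2 = (1 - α) / (2 * (α + 1)) := by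
    field_simp; ring
  have ht1 : t < 1 := by
    rw [htdef, hd]
    have h1 : (1 - α) / (2 * (α + 1)) < 1 := by
      rw [div_lt_one (by linarith)]; linarith
    nlinarith [div_pos (by linarith : (0:ℝ) < 1 - α) (by linarith : (0:ℝ) < 2*(α+1))]
  have ht0 : 0 < 1 - t := by linarith
  -- Bernoulli
  have hb : 1 + (1/α) * x ≤ (1 + x) ^ (1/α) := by
    apply one_add_mul_self_le_rpow_one_add (by linarith) 
    rw [le_div_iff₀ hα0]; linarith
  have hxα : (1/α) * x = y / (α + 1) := by
    rw [hxdef]; field_simp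
  have hkey : (1 - t)⁻¹ < 1 + y / (α + 1) := by
    rw [inv_lt_iff_one_lt_mul₀ ht0]
    have hu : y / (α+1) < 1 := by rw [div_lt_one hA]; linarith
    have huv : 0 < y / (α+1) := by positivity
    have htval : t = (y/(α+1)) * ((1-α)/2) := by
      rw [htdef]; field_simp; ring_nf
    rw [htval]
    nlinarith [mul_pos huv huv]
  have hP : (1 - t)⁻¹ < (1 + x) ^ (1/α) := by
    calc (1 - t)⁻¹ < 1 + y / (α + 1) := hkey
    _ = 1 + (1/α) * x := by rw [hxα]
    _ ≤ _ := hb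
  have hinv : ((1 + x) ^ (1/α))⁻¹ < ((1 - t)⁻¹)⁻¹ :=
    inv_strictAnti₀ (by positivity) hP
  rw [inv_inv] at hinv
  rwa [Real.rpow_neg (by linarith)]
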